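/- Let m be a positive integer. The infinite lower-triangular matrices of Whitney numbers of the first and second kind are mutually inverse: for all natural numbers n and k, ∑_{j=0}^n w_m(n,j)·W_m(j,k) equals 1 if n = k and 0 otherwise. -/

import Mathlib

/-- Signed Stirling numbers of the first kind, defined by
`X(X−1)(X−2)⋯(X−n+1) = ∑_{i=0}^n s(n,i)·X^i`. -/
noncomputable def stirling1q (n i : ℕ) : ℚ := (descPochhammer ℚ n).coeff i

/-- Whitney numbers of the first kind:
`w_m(n,k) = ∑_{i=0}^n (−1)^{i−k} C(i,k) m^{n−i} s(n,i)`. -/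
noncomputable def whitney1q (m n k : ℕ) : ℚ :=
  ∑ i ∈ Finset.range (n + 1), (-1 : ℚ) ^ (i - k) * (i.choose k) * (m : ℚ) ^ (n - i) * stirling1q n i

/-- Whitney numbers of the second kind:
`W_m(n,k) = (1/(m^k k!)) ∑_{i=0}^k (−1)^{k−i} C(k,i) (mi+1)^n`. -/
noncomputable def whitney2q (m n k : ℕ) : ℚ :=
  (1 / ((m : ℚ) ^ k * k.factorial)) *
    ∑ i ∈ Finset.range (k + 1), (-1 : ℚ) ^ (k - i) * (k.choose i) * ((m : ℚ) * i + 1) ^ n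

/-- Alternating binomial sum `∑_{j≤d} (-1)^{d-j} C(d,j) = [d = 0]`. -/
lemma aux_alt_sum (d : ℕ) :
    ∑ j ∈ Finset.range (d + 1), (-1 : ℚ) ^ (d - j) * (d.choose j) =
      if d = 0 then 1 else 0 := by
  have h := add_pow (1 : ℚ) (-1) d
  simp only [one_pow, one_mul, add_neg_cancel] at h
  rw [← h]
  rcases Nat.eq_zero_or_pos d with hd | hd
  · simp [hd]
  · rw [zero_pow (by omega : d ≠ 0), if_neg (by omega)]

/-- `∑_{i≤k} (-1)^{k-i} C(k,i) C(i,n) = [k = n]`. -/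
lemma aux_ortho (k n : ℕ) :
    ∑ i ∈ Finset.range (k + 1), (-1 : ℚ) ^ (k - i) * (k.choose i) * (i.choose n) =
      if k = n then 1 else 0 := by
  rcases lt_or_ge k n with hkn | hkn
  · rw [if_neg (by omega)]
    apply Finset.sum_eq_zero
    intro i hi
    rw [Finset.mem_range] at hi
    rw [Nat.choose_eq_zero_of_lt (show i < n by omega)]
    simp
  · -- n ≤ k
    have hz : ∀ i ∈ Finset.range (k + 1), i ∉ Finset.Ico n (k + 1) →
        (-1 : ℚ) ^ (k - i) * (k.choose i) * (i.choose n) = 0 := by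
      intro i hi hni
      rw [Finset.mem_range] at hi
      rw [Finset.mem_Ico] at hni
      rw [Nat.choose_eq_zero_of_lt (show i < n by omega)]
      simp
    rw [← Finset.sum_subset (by intro i hi; rw [Finset.mem_Ico] at hi; simp; omega) hz,
      Finset.sum_Ico_eq_sum_range]
    have hrw : ∀ t ∈ Finset.range (k + 1 - n),
        (-1 : ℚ) ^ (k - (n + t)) * (k.choose (n + t)) * ((n + t).choose n) =
          (k.choose n : ℚ) * ((-1 : ℚ) ^ ((k - n) - t) * ((k - n).choose t)) := by
      intro t ht
      rw [Finset.mem_range] at ht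
      have h1 : k - (n + t) = (k - n) - t := by omega
      have h2 : k.choose (n + t) * (n + t).choose n = k.choose n * (k - n).choose t := by
        have := Nat.choose_mul (n := k) (show n ≤ n + t by omega)
        simpa using this
      have h2' : (k.choose (n + t) : ℚ) * ((n + t).choose n) =
          (k.choose n : ℚ) * ((k - n).choose t) := by exact_mod_cast h2
      rw [h1]
      linear_combination ((-1 : ℚ) ^ ((k - n) - t)) * h2' 
    rw [Finset.sum_congr rfl hrw, ← Finset.mul_sum]
    have hd : k + 1 - n = (k - n) + 1 := by omega
    rw [hd, aux_alt_sum (k - n)]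
    rcases eq_or_ne k n with h | h
    · simp [h]
    · rw [if_neg (by omega), if_neg h, mul_zero]

/-- Evaluation of the first-kind Whitney row polynomial at `m*i+1`. -/
lemma aux_w_eval (m n i : ℕ) :
    ∑ j ∈ Finset.range (n + 1), whitney1q m n j * ((m : ℚ) * i + 1) ^ j =
      (m : ℚ) ^ n * (Nat.factorial n) * (i.choose n) := by
  unfold whitney1q
  simp only [Finset.sum_mul]
  rw [Finset.sum_comm]
  have step : ∀ t ∈ Finset.range (n + 1),
      ∑ j ∈ Finset.range (n + 1),
        (-1 : ℚ) ^ (t - j) * (t.choose j) * (m : ℚ) ^ (n - t) * stirling1q n t *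
          ((m : ℚ) * i + 1) ^ j
        = (m : ℚ) ^ n * (stirling1q n t * (i : ℚ) ^ t) := by
    intro t ht
    rw [Finset.mem_range] at ht
    have hsub : Finset.range (t + 1) ⊆ Finset.range (n + 1) :=
      Finset.range_subset_range.2 (by omega)
    have hz : ∀ j ∈ Finset.range (n + 1), j ∉ Finset.range (t + 1) →
        (-1 : ℚ) ^ (t - j) * (t.choose j) * (m : ℚ) ^ (n - t) * stirling1q n t *
          ((m : ℚ) * i + 1) ^ j = 0 := by
      intro j _ hj
      rw [Finset.mem_range] at hj
      rw [Nat.choose_eq_zero_of_lt (show t < j by omega)]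
      simp
    rw [← Finset.sum_subset hsub hz]
    have hbin : ∑ j ∈ Finset.range (t + 1),
        (-1 : ℚ) ^ (t - j) * (t.choose j) * ((m : ℚ) * i + 1) ^ j
        = ((m : ℚ) * i) ^ t := by
      have h := add_pow ((m : ℚ) * i + 1) (-1) t
      have h2 : ((m : ℚ) * i + 1) + (-1) = (m : ℚ) * i := by ring
      rw [h2] at h
      calc ∑ j ∈ Finset.range (t + 1),
          (-1 : ℚ) ^ (t - j) * (t.choose j) * ((m : ℚ) * i + 1) ^ j
          = ∑ j ∈ Finset.range (t + 1),
            ((m : ℚ) * i + 1) ^ j * (-1 : ℚ) ^ (t - j) * (t.choose j) :=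
            Finset.sum_congr rfl fun j _ => by ring
        _ = ((m : ℚ) * i) ^ t := h.symm
    calc ∑ j ∈ Finset.range (t + 1),
        (-1 : ℚ) ^ (t - j) * (t.choose j) * (m : ℚ) ^ (n - t) * stirling1q n t *
          ((m : ℚ) * i + 1) ^ j
        = ((m : ℚ) ^ (n - t) * stirling1q n t) *
            ∑ j ∈ Finset.range (t + 1),
              (-1 : ℚ) ^ (t - j) * (t.choose j) * ((m : ℚ) * i + 1) ^ j := by
          rw [Finset.mul_sum]; exact Finset.sum_congr rfl fun j _ => by ring
      _ = (m : ℚ) ^ (n - t) * stirling1q n t * ((m : ℚ) * i) ^ t := by rw [hbin]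
      _ = (m : ℚ) ^ n * (stirling1q n t * (i : ℚ) ^ t) := by
          have hmm : (m : ℚ) ^ (n - t) * (m : ℚ) ^ t = (m : ℚ) ^ n := by
            rw [← pow_add]; congr 1; omega
          rw [mul_pow]
          linear_combination (stirling1q n t * (i : ℚ) ^ t) * hmm
  rw [Finset.sum_congr rfl step, ← Finset.mul_sum]
  have heval : ∑ t ∈ Finset.range (n + 1), stirling1q n t * (i : ℚ) ^ t =
      (Nat.factorial n : ℚ) * (i.choose n) := by
    have hdeg : (descPochhammer ℚ n).natDegree < n + 1 := by
      rw [descPochhammer_natDegree]; omega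
    have := Polynomial.eval_eq_sum_range' hdeg ((i : ℚ))
    rw [descPochhammer_eval_eq_descFactorial ℚ i n] at this
    unfold stirling1q
    rw [← this, Nat.descFactorial_eq_factorial_mul_choose]
    push_cast
    ring
  rw [heval, mul_assoc]

/-- The matrices of Whitney numbers of the first and second kind are mutually inverse:
`∑_{j=0}^n w_m(n,j)·W_m(j,k) = [n = k]`. -/
theorem whitney_matrices_inverse (m : ℕ) (hm : 0 < m) (n k : ℕ) :
    ∑ j ∈ Finset.range (n + 1), whitney1q m n j * whitney2q m j k =
      if n = k then 1 else 0 := by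
  unfold whitney2q
  have hswap : ∑ j ∈ Finset.range (n + 1), whitney1q m n j *
      ((1 / ((m : ℚ) ^ k * k.factorial)) *
        ∑ i ∈ Finset.range (k + 1), (-1 : ℚ) ^ (k - i) * (k.choose i) * ((m : ℚ) * i + 1) ^ j)
      = (1 / ((m : ℚ) ^ k * k.factorial)) *
        ∑ i ∈ Finset.range (k + 1), (-1 : ℚ) ^ (k - i) * (k.choose i) *
          ∑ j ∈ Finset.range (n + 1), whitney1q m n j * ((m : ℚ) * i + 1) ^ j := by
    calc ∑ j ∈ Finset.range (n + 1), whitney1q m n j *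
          ((1 / ((m : ℚ) ^ k * k.factorial)) *
            ∑ i ∈ Finset.range (k + 1),
              (-1 : ℚ) ^ (k - i) * (k.choose i) * ((m : ℚ) * i + 1) ^ j)
        = ∑ j ∈ Finset.range (n + 1), ∑ i ∈ Finset.range (k + 1),
            whitney1q m n j * ((1 / ((m : ℚ) ^ k * k.factorial)) *
              ((-1 : ℚ) ^ (k - i) * (k.choose i) * ((m : ℚ) * i + 1) ^ j)) := by
          refine Finset.sum_congr rfl fun j _ => ?_
          rw [Finset.mul_sum, Finset.mul_sum]
      _ = ∑ i ∈ Finset.range (k + 1), ∑ j ∈ Finset.range (n + 1),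
            whitney1q m n j * ((1 / ((m : ℚ) ^ k * k.factorial)) *
              ((-1 : ℚ) ^ (k - i) * (k.choose i) * ((m : ℚ) * i + 1) ^ j)) :=
          Finset.sum_comm
      _ = (1 / ((m : ℚ) ^ k * k.factorial)) *
          ∑ i ∈ Finset.range (k + 1), (-1 : ℚ) ^ (k - i) * (k.choose i) *
            ∑ j ∈ Finset.range (n + 1), whitney1q m n j * ((m : ℚ) * i + 1) ^ j := by
          rw [Finset.mul_sum]
          refine Finset.sum_congr rfl fun i _ => ?_
          conv_rhs => rw [Finset.mul_sum, Finset.mul_sum]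
          refine Finset.sum_congr rfl fun j _ => by ring
  rw [hswap]
  have hstep : ∀ i ∈ Finset.range (k + 1),
      (-1 : ℚ) ^ (k - i) * (k.choose i) *
        ∑ j ∈ Finset.range (n + 1), whitney1q m n j * ((m : ℚ) * i + 1) ^ j
      = ((m : ℚ) ^ n * (Nat.factorial n)) *
        ((-1 : ℚ) ^ (k - i) * (k.choose i) * (i.choose n)) := by
    intro i _
    rw [aux_w_eval m n i]
    ring
  rw [Finset.sum_congr rfl hstep, ← Finset.mul_sum, aux_ortho k n]
  have hm' : (m : ℚ) ≠ 0 := by positivity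
  rcases eq_or_ne n k with h | h
  · subst h
    rw [if_pos rfl, mul_one]
    have h1 : (m : ℚ) ^ n ≠ 0 := by positivity
    have h2 : ((n.factorial : ℚ)) ≠ 0 := by positivity
    field_simp
  · rw [if_neg (fun hh => h hh.symm), if_neg h, mul_zero, mul_zero]
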